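/- Let n ≥ 1 and λ_0,...,λ_n > 0, and let A(λ) be the associated (n+2)×(n+2) Jacobi matrix. Suppose σ > 0 and ζ ∈ ℝ^{n+2} has all entries positive with A(λ)ζ = σζ. Define e_i := λ_i^{−1/2} σ^{−1} ζ_{i+2}/ζ_{i+1} for i = 1,...,n. Then e ∈ (0,1)^n, e satisfies the RFM steady-state equations λ_0(1−e_1) = λ_1 e_1(1−e_2) = ⋯ = λ_{n−1} e_{n−1}(1−e_n) = λ_n e_n, and the steady-state production rate satisfies λ_n e_n = σ^{−2}. -/

import Mathlib

open scoped BigOperators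

/-- Extended occupancy vector of an RFM chain with `N + 1` sites:
the input value `u` at the left boundary, the state in the middle,
and `0` at the right boundary. -/
noncomputable def rfmExt {N : ℕ} (u : ℝ) (x : Fin (N + 1) → ℝ) : Fin (N + 3) → ℝ :=
  Fin.cons u (Fin.snoc x 0)

/-- The flow into site `j` (so `j = 0` is the entry flow `λ₀ u (1 - x₁)`,
`j` internal is `λ_j x_j (1 - x_{j+1})` in 1-based notation,
and `j = N + 1` is the exit flow `λ_n x_n`). -/
noncomputable def rfmFlow {N : ℕ} (lam : Fin (N + 2) → ℝ) (u : ℝ)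
    (x : Fin (N + 1) → ℝ) (j : Fin (N + 2)) : ℝ :=
  lam j * rfmExt u x j.castSucc * (1 - rfmExt u x j.succ)

/-- The vector field of a single RFMIO chain with input `u`. -/
noncomputable def rfmVF {N : ℕ} (lam : Fin (N + 2) → ℝ) (u : ℝ)
    (x : Fin (N + 1) → ℝ) (j : Fin (N + 1)) : ℝ :=
  rfmFlow lam u x j.castSucc - rfmFlow lam u x j.succ

/-- The steady-state equations of an RFM chain with input `u`: all flows are equal,
i.e. `λ₀ u (1-e₁) = λ₁ e₁ (1-e₂) = ⋯ = λ_n e_n`. -/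
def rfmSS {N : ℕ} (lam : Fin (N + 2) → ℝ) (u : ℝ) (e : Fin (N + 1) → ℝ) : Prop :=
  ∀ j : Fin (N + 1), rfmFlow lam u e j.castSucc = rfmFlow lam u e j.succ

/-- The off-diagonal entry `λ_j^{-1/2}` of the Jacobi matrix (0-based rate index),
defined for all natural `j` for convenience. -/
noncomputable def jacobiEntry {N : ℕ} (lam : Fin (N + 2) → ℝ) (j : ℕ) : ℝ :=
  if h : j < N + 2 then (Real.sqrt (lam ⟨j, h⟩))⁻¹ else 0

/-- The `(n+2) × (n+2)` symmetric tridiagonal Jacobi matrix associated with an RFM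
with `n = N + 1` sites and rates `λ₀, …, λ_n`: zero diagonal and off-diagonal entries
`A_{i,i+1} = A_{i+1,i} = λ_{i-1}^{-1/2}` (1-based indexing). -/
noncomputable def jacobiMat {N : ℕ} (lam : Fin (N + 2) → ℝ) :
    Matrix (Fin (N + 3)) (Fin (N + 3)) ℝ :=
  fun p q =>
    if (p : ℕ) + 1 = (q : ℕ) then jacobiEntry lam p
    else if (q : ℕ) + 1 = (p : ℕ) then jacobiEntry lam q
    else 0

lemma rfmExt_mk {N : ℕ} (u : ℝ) (x : Fin (N + 1) → ℝ) (k : ℕ) (h : k < N + 3) :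
    rfmExt u x ⟨k, h⟩ =
      if k = 0 then u else if hk : k - 1 < N + 1 then x ⟨k - 1, hk⟩ else 0 := by
  unfold rfmExt
  rcases k with _ | m
  · simp
  · have h1 : (⟨m + 1, h⟩ : Fin (N + 3)) = Fin.succ ⟨m, by omega⟩ := rfl
    rw [h1, Fin.cons_succ]
    by_cases hm : m < N + 1
    · have h2 : (⟨m, by omega⟩ : Fin (N + 2)) = Fin.castSucc ⟨m, hm⟩ := rfl
      rw [h2, Fin.snoc_castSucc]
      simp [hm]
    · have hm' : m = N + 1 := by omega
      subst hm'
      have h2 : (⟨N + 1, by omega⟩ : Fin (N + 2)) = Fin.last (N + 1) := rfl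
      rw [h2, Fin.snoc_last]
      simp

lemma jacobi_mulVec {N : ℕ} (lam : Fin (N + 2) → ℝ) (ζ : Fin (N + 3) → ℝ)
    (p : Fin (N + 3)) :
    (jacobiMat lam).mulVec ζ p =
      (if h : (p : ℕ) + 1 < N + 3 then jacobiEntry lam p * ζ ⟨(p : ℕ) + 1, h⟩ else 0) +
      (if (p : ℕ) ≠ 0 then
          jacobiEntry lam ((p : ℕ) - 1) *
            ζ ⟨(p : ℕ) - 1, lt_of_le_of_lt (Nat.sub_le _ _) p.isLt⟩ else 0) := by
  have hsplit : ∀ q : Fin (N + 3), jacobiMat lam p q * ζ q =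
      (if (p : ℕ) + 1 = (q : ℕ) then jacobiEntry lam (p : ℕ) * ζ q else 0) +
      (if (q : ℕ) + 1 = (p : ℕ) then jacobiEntry lam (q : ℕ) * ζ q else 0) := by
    intro q
    unfold jacobiMat
    split_ifs with h1 h2 <;> first | omega | ring
  unfold Matrix.mulVec dotProduct
  rw [Finset.sum_congr rfl fun q _ => hsplit q, Finset.sum_add_distrib]
  congr 1
  · by_cases h : (p : ℕ) + 1 < N + 3
    · rw [dif_pos h, Finset.sum_eq_single (⟨(p : ℕ) + 1, h⟩ : Fin (N + 3))]
      · simp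
      · intro b _ hb
        rw [if_neg]
        intro hc
        exact hb (Fin.ext hc.symm)
      · simp
    · rw [dif_neg h]
      apply Finset.sum_eq_zero
      intro q _
      rw [if_neg]
      omega
  · by_cases h : (p : ℕ) ≠ 0
    · rw [if_pos h, Finset.sum_eq_single
        (⟨(p : ℕ) - 1, lt_of_le_of_lt (Nat.sub_le _ _) p.isLt⟩ : Fin (N + 3))]
      · have hc : ((⟨(p : ℕ) - 1, lt_of_le_of_lt (Nat.sub_le _ _) p.isLt⟩ :
            Fin (N + 3)) : ℕ) = (p : ℕ) - 1 := rfl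
        rw [hc, if_pos (by omega : (p : ℕ) - 1 + 1 = (p : ℕ))]
      · intro b _ hb
        rw [if_neg]
        intro hc
        exact hb (Fin.ext (show (b : ℕ) = (p : ℕ) - 1 by omega))
      · simp
    · rw [if_neg h]
      apply Finset.sum_eq_zero
      intro q _
      rw [if_neg]
      omega


private lemma alg_ratio (a s z y : ℝ) : a * s⁻¹ * (z / y) = a * z / (s * y) := by
  rw [div_eq_mul_inv, div_eq_mul_inv, mul_inv]; ring

private lemma alg_entry (L a0 a1 z0 z1 z2 s e1 : ℝ) (hs0 : s ≠ 0) (hz1 : z1 ≠ 0)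
    (he1 : e1 = a1 * s⁻¹ * (z2 / z1))
    (h0 : a0 * z1 = s * z0) (hmid : a1 * z2 + a0 * z0 = s * z1) (hsq : L * a0 ^ 2 = 1) :
    L * 1 * (1 - e1) = (s ^ 2)⁻¹ := by
  subst he1
  field_simp
  linear_combination (-L * s) * hmid + (-L * a0) * h0 + z1 * hsq

private lemma alg_mid (L a b y z w s e1 e2 : ℝ) (hs0 : s ≠ 0) (hy : y ≠ 0) (hz : z ≠ 0)
    (he1 : e1 = a * s⁻¹ * (z / y)) (he2 : e2 = b * s⁻¹ * (w / z))
    (hmid : b * w + a * y = s * z) (hsq : L * a ^ 2 = 1) :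
    L * e1 * (1 - e2) = (s ^ 2)⁻¹ := by
  subst he1 he2
  field_simp
  linear_combination (-L * a) * hmid + y * hsq

private lemma alg_exit (L a y z s e1 : ℝ) (hs0 : s ≠ 0) (hy : y ≠ 0)
    (he1 : e1 = a * s⁻¹ * (z / y))
    (hlast : a * y = s * z) (hsq : L * a ^ 2 = 1) :
    L * e1 * (1 - 0) = (s ^ 2)⁻¹ := by
  subst he1
  field_simp
  linear_combination (-L * a) * hlast + y * hsq

private lemma alg_exit' (L a y z s e1 : ℝ) (hs0 : s ≠ 0) (hy : y ≠ 0)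
    (he1 : e1 = a * s⁻¹ * (z / y))
    (hlast : a * y = s * z) (hsq : L * a ^ 2 = 1) :
    L * e1 = (s ^ 2)⁻¹ := by
  subst he1
  field_simp
  linear_combination (-L * a) * hlast + y * hsq

/-- If `σ > 0` and `ζ` is a positive vector with `A(λ) ζ = σ ζ`,
then `e_i := λ_i^{-1/2} σ^{-1} ζ_{i+2} / ζ_{i+1}` lies in `(0,1)^n`, satisfies the
RFM steady-state equations, and the production rate is `λ_n e_n = σ^{-2}`. -/
theorem spectral_representation_gives_steady_state
    (N : ℕ) (lam : Fin (N + 2) → ℝ) (hlam : ∀ j, 0 < lam j)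
    (σ : ℝ) (hσ : 0 < σ)
    (ζ : Fin (N + 3) → ℝ) (hζ : ∀ k, 0 < ζ k)
    (heig : (jacobiMat lam).mulVec ζ = σ • ζ)
    (e : Fin (N + 1) → ℝ)
    (he : ∀ j : Fin (N + 1),
      e j = (Real.sqrt (lam j.succ))⁻¹ * σ⁻¹ * (ζ j.succ.succ / ζ j.succ.castSucc)) :
    (∀ j, e j ∈ Set.Ioo (0 : ℝ) 1) ∧ rfmSS lam 1 e ∧
      lam (Fin.last (N + 1)) * e (Fin.last N) = (σ ^ 2)⁻¹ := by
  have hσ0 : σ ≠ 0 := ne_of_gt hσ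
  have key' : ∀ (k : ℕ) (hk : k < N + 3),
      (if h : k + 1 < N + 3 then jacobiEntry lam k * ζ ⟨k + 1, h⟩ else 0) +
      (if k ≠ 0 then jacobiEntry lam (k - 1) *
          ζ ⟨k - 1, by omega⟩ else 0) = σ * ζ ⟨k, hk⟩ := by
    intro k hk
    have h := jacobi_mulVec lam ζ ⟨k, hk⟩
    rw [heig] at h
    simpa using h.symm
  have hE : ∀ (k : ℕ) (hk : k < N + 2),
      jacobiEntry lam k = (Real.sqrt (lam ⟨k, hk⟩))⁻¹ := fun k hk => dif_pos hk
  have haPos : ∀ (k : ℕ) (hk : k < N + 2), 0 < jacobiEntry (N := N) lam k := by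
    intro k hk
    rw [hE k hk]
    exact inv_pos.mpr (Real.sqrt_pos.mpr (hlam _))
  have hsq : ∀ (k : ℕ) (hk : k < N + 2),
      lam ⟨k, hk⟩ * (jacobiEntry lam k) ^ 2 = 1 := by
    intro k hk
    rw [hE k hk, inv_pow, Real.sq_sqrt (hlam ⟨k, hk⟩).le]
    exact mul_inv_cancel₀ (ne_of_gt (hlam _))
  have E0 : jacobiEntry lam 0 * ζ ⟨1, by omega⟩ = σ * ζ ⟨0, by omega⟩ := by
    have h := key' 0 (by omega)
    rw [dif_pos (by omega : 0 + 1 < N + 3), if_neg (by omega : ¬(0 : ℕ) ≠ 0),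
      add_zero] at h
    exact h
  have Emid : ∀ (k : ℕ) (hk : k + 1 < N + 2),
      jacobiEntry lam (k + 1) * ζ ⟨k + 2, by omega⟩ + jacobiEntry lam k * ζ ⟨k, by omega⟩
        = σ * ζ ⟨k + 1, by omega⟩ := by
    intro k hk
    have h := key' (k + 1) (by omega)
    rw [dif_pos (by omega : k + 1 + 1 < N + 3), if_pos (by omega : k + 1 ≠ 0)] at h
    exact h
  have Elast : jacobiEntry lam (N + 1) * ζ ⟨N + 1, by omega⟩ = σ * ζ ⟨N + 2, by omega⟩ := by
    have h := key' (N + 2) (by omega)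
    rw [dif_neg (by omega : ¬N + 2 + 1 < N + 3), if_pos (by omega : N + 2 ≠ 0),
      zero_add] at h
    exact h
  have he' : ∀ j : Fin (N + 1), e j = jacobiEntry lam ((j : ℕ) + 1) * σ⁻¹ *
      (ζ ⟨(j : ℕ) + 2, by omega⟩ / ζ ⟨(j : ℕ) + 1, by omega⟩) := by
    intro j
    rw [hE ((j : ℕ) + 1) (by omega)]
    exact he j
  have he'' : ∀ (m : ℕ) (hm : m < N + 1), e ⟨m, hm⟩ = jacobiEntry lam (m + 1) * σ⁻¹ *
      (ζ ⟨m + 2, by omega⟩ / ζ ⟨m + 1, by omega⟩) := fun m hm => he' ⟨m, hm⟩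
  -- all flows are equal to σ⁻²
  have hflow : ∀ j : Fin (N + 2), rfmFlow lam 1 e j = (σ ^ 2)⁻¹ := by
    intro j
    obtain ⟨jv, hj⟩ := j
    have hcast : Fin.castSucc (⟨jv, hj⟩ : Fin (N + 2)) = ⟨jv, by omega⟩ := rfl
    have hsucc : Fin.succ (⟨jv, hj⟩ : Fin (N + 2)) = ⟨jv + 1, by omega⟩ := rfl
    unfold rfmFlow
    rw [hcast, hsucc, rfmExt_mk, rfmExt_mk]
    rcases jv with _ | k
    · -- entry flow
      simp only [Nat.add_sub_cancel]
      rw [if_pos trivial, if_neg (by omega : ¬(0 : ℕ) + 1 = 0),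
        dif_pos (by omega : (0 : ℕ) < N + 1)]
      have hz1 : (0 : ℝ) < ζ ⟨1, by omega⟩ := hζ _
      have h0 := he'' 0 (by omega)
      have hmid := Emid 0 (by omega)
      have hs := hsq 0 (by omega)
      exact alg_entry _ _ _ _ _ _ _ _ hσ0 (ne_of_gt hz1) h0 E0 hmid hs
    · by_cases hk : k + 1 < N + 1
      · -- internal flow
        simp only [Nat.add_sub_cancel]
        rw [if_neg (by omega : ¬k + 1 = 0), if_neg (by omega : ¬k + 1 + 1 = 0),
          dif_pos (by omega : k < N + 1), dif_pos (by omega : k + 1 < N + 1)]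
        have h1 := he'' k (by omega)
        have h2 := he'' (k + 1) (by omega)
        have hz1 : (0 : ℝ) < ζ ⟨k + 1, by omega⟩ := hζ _
        have hz2 : (0 : ℝ) < ζ ⟨k + 2, by omega⟩ := hζ _
        have hmid := Emid (k + 1) (by omega)
        have hs := hsq (k + 1) (by omega)
        exact alg_mid _ _ _ _ _ _ _ _ _ hσ0 (ne_of_gt hz1) (ne_of_gt hz2) h1 h2 hmid hs
      · -- exit flow
        have hkN : N = k := by omega
        subst hkN
        simp only [Nat.add_sub_cancel]
        simp only [if_neg (show ¬N + 1 = 0 by omega), if_neg (show ¬N + 1 + 1 = 0 by omega),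
          dif_pos (show N < N + 1 by omega), dif_neg (show ¬N + 1 < N + 1 by omega)]
        have h1 := he'' N (by omega)
        have hz1 : (0 : ℝ) < ζ ⟨N + 1, by omega⟩ := hζ _
        have hs := hsq (N + 1) (by omega)
        exact alg_exit _ _ _ _ _ _ hσ0 (ne_of_gt hz1) h1 Elast hs
  refine ⟨?_, ?_, ?_⟩
  · -- e ∈ (0,1)
    intro j
    have hkk : (j : ℕ) + 1 < N + 2 := by omega
    have hmid := Emid (j : ℕ) hkk
    have hz0 : (0 : ℝ) < ζ ⟨(j : ℕ), by omega⟩ := hζ _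
    have hz1 : (0 : ℝ) < ζ ⟨(j : ℕ) + 1, by omega⟩ := hζ _
    have hz2 : (0 : ℝ) < ζ ⟨(j : ℕ) + 2, by omega⟩ := hζ _
    have ha1 := haPos ((j : ℕ) + 1) hkk
    have ha0 := haPos (j : ℕ) (by omega)
    have heq : e j = (jacobiEntry lam ((j : ℕ) + 1) * ζ ⟨(j : ℕ) + 2, by omega⟩) /
        (σ * ζ ⟨(j : ℕ) + 1, by omega⟩) := by
      rw [he' j]
      exact alg_ratio _ _ _ _
    constructor
    · rw [heq]; positivity
    · rw [heq, div_lt_one (by positivity)]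
      linarith [hmid, mul_pos ha0 hz0]
  · -- steady state
    intro j
    rw [hflow, hflow]
  · -- production rate
    have h1 := he'' N (by omega)
    have hz1 : (0 : ℝ) < ζ ⟨N + 1, by omega⟩ := hζ _
    have hs := hsq (N + 1) (by omega)
    show lam ⟨N + 1, by omega⟩ * e ⟨N, by omega⟩ = (σ ^ 2)⁻¹
    exact alg_exit' _ _ _ _ _ _ hσ0 (ne_of_gt hz1) h1 Elast hs
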